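/- Let ξ be a random variable with E ξ = 0, E ξ² = 1, and suppose L > 0 satisfies ∫_{L²}^∞ P{ξ² ≥ t} dt ≤ 1/2. Then E|ξ| ≥ 1/(4L). -/

import Mathlib

open MeasureTheory
open scoped ENNReal

theorem abs_integral_lower_bound {Ω : Type} [MeasurableSpace Ω]
    (μ : Measure Ω) [IsProbabilityMeasure μ] (ξ : Ω → ℝ) (hmeas : Measurable ξ)
    (hint : Integrable ξ μ) (hmean : (∫ ω, ξ ω ∂μ) = 0)
    (hint2 : Integrable (fun ω => ξ ω ^ 2) μ) (hvar : (∫ ω, ξ ω ^ 2 ∂μ) = 1)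
    (L : ℝ) (hL : 0 < L)
    (htail : (∫ t in Set.Ioi (L ^ 2), (μ {ω | t ≤ ξ ω ^ 2}).toReal) ≤ 1 / 2) :
    1 / (4 * L) ≤ ∫ ω, |ξ ω| ∂μ := by
  have hL2 : (0:ℝ) < L ^ 2 := by positivity
  set G : ℝ → ℝ≥0∞ := fun t => μ {ω | t ≤ ξ ω ^ 2} with hG
  have hGanti : Antitone G := fun s t hst =>
    measure_mono (fun ω hω => le_trans hst hω)
  have hGmeas : Measurable G := hGanti.measurable
  -- layer cake for ξ^2
  have hsq_nn : 0 ≤ᵐ[μ] fun ω => ξ ω ^ 2 := Filter.Eventually.of_forall fun ω => sq_nonneg _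
  have hA : ∫⁻ t in Set.Ioi (0:ℝ), G t = 1 := by
    rw [← lintegral_eq_lintegral_meas_le μ hsq_nn hint2.aemeasurable,
      ← ofReal_integral_eq_lintegral_ofReal hint2 hsq_nn, hvar, ENNReal.ofReal_one]
  have hsplit : ∫⁻ t in Set.Ioi (0:ℝ), G t
      = (∫⁻ t in Set.Ioc 0 (L^2), G t) + ∫⁻ t in Set.Ioi (L^2), G t := by
    rw [← Set.Ioc_union_Ioi_eq_Ioi hL2.le,
      lintegral_union measurableSet_Ioi Set.Ioc_disjoint_Ioi_same]
  -- tail part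
  have htailfin : ∫⁻ t in Set.Ioi (L^2), G t ≠ ⊤ := by
    have hle : ∫⁻ t in Set.Ioi (L^2), G t ≤ 1 :=
      hA ▸ lintegral_mono_set (Set.Ioi_subset_Ioi hL2.le)
    exact (lt_of_le_of_lt hle ENNReal.one_lt_top).ne
  have hIntOn : IntegrableOn (fun t => (G t).toReal) (Set.Ioi (L^2)) volume :=
    integrable_toReal_of_lintegral_ne_top hGmeas.aemeasurable.restrict htailfin
  have hC : ∫⁻ t in Set.Ioi (L^2), G t ≤ ENNReal.ofReal (1/2) := by
    have heq := ofReal_integral_eq_lintegral_ofReal hIntOn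
      (Filter.Eventually.of_forall fun t => ENNReal.toReal_nonneg)
    rw [show (∫⁻ t in Set.Ioi (L^2), G t)
        = ∫⁻ t in Set.Ioi (L^2), ENNReal.ofReal ((G t).toReal) from
      lintegral_congr fun t => (ENNReal.ofReal_toReal (measure_ne_top μ _)).symm, ← heq]
    exact ENNReal.ofReal_le_ofReal htail
  -- lower part
  have hD : ENNReal.ofReal (1/2) ≤ ∫⁻ t in Set.Ioc 0 (L^2), G t := by
    have h1 : (1:ℝ≥0∞) = ENNReal.ofReal (1/2) + ENNReal.ofReal (1/2) := by
      rw [← ENNReal.ofReal_add (by norm_num) (by norm_num)]; norm_num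
    have h2 : ENNReal.ofReal (1/2) + ENNReal.ofReal (1/2)
        ≤ (∫⁻ t in Set.Ioc 0 (L^2), G t) + ENNReal.ofReal (1/2) := by
      rw [← h1, ← hA, hsplit]
      exact add_le_add_right hC _
    exact (ENNReal.add_le_add_iff_right ENNReal.ofReal_ne_top).mp h2
  -- the truncated function
  set m : Ω → ℝ := fun ω => min (ξ ω ^ 2) (L ^ 2) with hm
  have hm_nn : 0 ≤ᵐ[μ] m := Filter.Eventually.of_forall fun ω =>
    le_min (sq_nonneg _) hL2.le
  have hm_meas : Measurable m := (hmeas.pow_const 2).min measurable_const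
  have hE : ∫⁻ ω, ENNReal.ofReal (m ω) ∂μ = ∫⁻ t in Set.Ioi (0:ℝ), μ {a | t ≤ m a} :=
    lintegral_eq_lintegral_meas_le μ hm_nn hm_meas.aemeasurable
  have hF : ∫⁻ t in Set.Ioi (0:ℝ), μ {a | t ≤ m a} = ∫⁻ t in Set.Ioc 0 (L^2), G t := by
    rw [← Set.Ioc_union_Ioi_eq_Ioi hL2.le,
      lintegral_union measurableSet_Ioi Set.Ioc_disjoint_Ioi_same]
    have e1 : ∫⁻ t in Set.Ioc 0 (L^2), μ {a | t ≤ m a}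
        = ∫⁻ t in Set.Ioc 0 (L^2), G t := by
      refine setLIntegral_congr_fun measurableSet_Ioc
        (fun t ht => ?_)
      congr 1
      ext a
      simp only [hm, Set.mem_setOf_eq, le_min_iff, hG]
      exact ⟨fun h => h.1, fun h => ⟨h, ht.2⟩⟩
    have e2 : ∫⁻ t in Set.Ioi (L^2), μ {a | t ≤ m a} = 0 := by
      rw [show (∫⁻ t in Set.Ioi (L^2), μ {a | t ≤ m a})
          = ∫⁻ _t in Set.Ioi (L^2), (0:ℝ≥0∞) from ?_, lintegral_zero]
      refine setLIntegral_congr_fun measurableSet_Ioi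
        (fun t ht => ?_)
      have : {a | t ≤ m a} = ∅ := by
        ext a
        simp only [hm, Set.mem_setOf_eq, le_min_iff, Set.mem_empty_iff_false, iff_false]
        intro h
        exact absurd h.2 (not_le.mpr ht)
      rw [this, measure_empty]
    rw [e1, e2, add_zero]
  -- pointwise bound m ≤ L * |ξ|
  have hpt : ∀ ω, m ω ≤ L * |ξ ω| := by
    intro ω
    rcases le_total (|ξ ω|) L with h | h
    · calc m ω ≤ ξ ω ^ 2 := min_le_left _ _
        _ = |ξ ω| * |ξ ω| := by rw [← sq_abs, sq]
        _ ≤ L * |ξ ω| := mul_le_mul_of_nonneg_right h (abs_nonneg _)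
    · calc m ω ≤ L ^ 2 := min_le_right _ _
        _ = L * L := sq L
        _ ≤ L * |ξ ω| := mul_le_mul_of_nonneg_left h hL.le
  have habs : Integrable (fun ω => L * |ξ ω|) μ := hint.abs.const_mul L
  have hR : ∫⁻ ω, ENNReal.ofReal (L * |ξ ω|) ∂μ
      = ENNReal.ofReal (L * ∫ ω, |ξ ω| ∂μ) := by
    rw [← ofReal_integral_eq_lintegral_ofReal habs
      (Filter.Eventually.of_forall fun ω => by positivity), integral_const_mul]
  have key : ENNReal.ofReal (1/2) ≤ ENNReal.ofReal (L * ∫ ω, |ξ ω| ∂μ) := by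
    calc ENNReal.ofReal (1/2) ≤ ∫⁻ t in Set.Ioc 0 (L^2), G t := hD
      _ = ∫⁻ ω, ENNReal.ofReal (m ω) ∂μ := by rw [hE, hF]
      _ ≤ ∫⁻ ω, ENNReal.ofReal (L * |ξ ω|) ∂μ :=
          lintegral_mono fun ω => ENNReal.ofReal_le_ofReal (hpt ω)
      _ = _ := hR
  have hInn : 0 ≤ ∫ ω, |ξ ω| ∂μ := integral_nonneg fun ω => abs_nonneg _
  have h12 : (1:ℝ)/2 ≤ L * ∫ ω, |ξ ω| ∂μ :=
    (ENNReal.ofReal_le_ofReal_iff (by positivity)).mp key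
  rw [div_le_iff₀ (by positivity)]
  nlinarith
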